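/- Let ε > 0 and α > 1, and set β = (α − 1)(I(X;Y) + ε − d_α(Q_{X,Y}, Q_X Q_Y)). Over the random i.i.d. codebook 𝒞 of size 2^{nR}, the probability that Σ_{y^n} P_{𝒞,2}(y^n) ≥ 2·2^{−βn} is at most e^{−(1/3) 2^{n(R − β)}}. -/

import Mathlib

open Finset Real
open scoped BigOperators Classical

noncomputable section SoftCovering

/-- `p` is a probability mass function on the finite type `α`. -/
def IsPMF {α : Type*} [Fintype α] (p : α → ℝ) : Prop :=
  (∀ a, 0 ≤ p a) ∧ ∑ a, p a = 1

variable {𝒳 𝒴 : Type*} [Fintype 𝒳] [Fintype 𝒴]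

/-- The output distribution `Q_Y` on `𝒴` induced by the input distribution `Q_X`
and the channel `Q_{Y|X}`. -/
def outDist (QX : 𝒳 → ℝ) (QYX : 𝒳 → 𝒴 → ℝ) (y : 𝒴) : ℝ := ∑ x, QX x * QYX x y

/-- The `n`-fold i.i.d. product of a distribution `p`. -/
def prodDist {α : Type*} [Fintype α] (p : α → ℝ) (n : ℕ) (xs : Fin n → α) : ℝ :=
  ∏ i, p (xs i)

/-- The `n`-fold memoryless channel: `Q_{Y^n|X^n = xs}(ys)`. -/
def chanProd (QYX : 𝒳 → 𝒴 → ℝ) (n : ℕ) (xs : Fin n → 𝒳) (ys : Fin n → 𝒴) : ℝ :=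
  ∏ i, QYX (xs i) (ys i)

/-- The information density `ı_{X;Y}(x;y) = log₂ (Q_{Y|X}(y|x) / Q_Y(y))`, in bits. -/
def infoDensity (QX : 𝒳 → ℝ) (QYX : 𝒳 → 𝒴 → ℝ) (x : 𝒳) (y : 𝒴) : ℝ :=
  Real.logb 2 (QYX x y / outDist QX QYX y)

/-- The mutual information `I(X;Y)` of `(X,Y) ~ Q_X Q_{Y|X}`, in bits. -/
def mutualInfo (QX : 𝒳 → ℝ) (QYX : 𝒳 → 𝒴 → ℝ) : ℝ :=
  ∑ x, ∑ y, QX x * QYX x y * infoDensity QX QYX x y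

/-- The variance `V` of the information density under `(X,Y) ~ Q_X Q_{Y|X}`. -/
def infoVar (QX : 𝒳 → ℝ) (QYX : 𝒳 → 𝒴 → ℝ) : ℝ :=
  ∑ x, ∑ y, QX x * QYX x y * (infoDensity QX QYX x y - mutualInfo QX QYX) ^ 2

/-- The centered third absolute moment `ρ` of the information density. -/
def infoThird (QX : 𝒳 → ℝ) (QYX : 𝒳 → 𝒴 → ℝ) : ℝ :=
  ∑ x, ∑ y, QX x * QYX x y * |infoDensity QX QYX x y - mutualInfo QX QYX| ^ 3

/-- The Rényi divergence of order `a` between `Q_{X,Y} = Q_X Q_{Y|X}` and the product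
of its marginals `Q_X Q_Y`, in bits. -/
def renyiDiv (QX : 𝒳 → ℝ) (QYX : 𝒳 → 𝒴 → ℝ) (a : ℝ) : ℝ :=
  (a - 1)⁻¹ * Real.logb 2 (∑ x, ∑ y,
    (QX x * QYX x y) ^ a * (QX x * outDist QX QYX y) ^ (1 - a))

/-- Membership in the jointly typical set
`𝒜_ε = {(x^n,y^n) : (1/n) log₂ (Q_{Y^n|X^n=x^n}(y^n)/Q_{Y^n}(y^n)) ≤ I(X;Y) + ε}`. -/
def JTypical (QX : 𝒳 → ℝ) (QYX : 𝒳 → 𝒴 → ℝ) (n : ℕ) (ε : ℝ)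
    (xs : Fin n → 𝒳) (ys : Fin n → 𝒴) : Prop :=
  (n : ℝ)⁻¹ * Real.logb 2 (chanProd QYX n xs ys / prodDist (outDist QX QYX) n ys)
    ≤ mutualInfo QX QYX + ε

/-- The probability that `(X^n, Y^n) ~ Q_{X^n} Q_{Y^n|X^n}` is outside `𝒜_ε`. -/
def atypProb (QX : 𝒳 → ℝ) (QYX : 𝒳 → 𝒴 → ℝ) (n : ℕ) (ε : ℝ) : ℝ :=
  ∑ xs : Fin n → 𝒳, ∑ ys : Fin n → 𝒴,
    if ¬ JTypical QX QYX n ε xs ys then prodDist QX n xs * chanProd QYX n xs ys else 0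

/-- The induced output distribution `P_{Y^n|C} = 2^{-nR} ∑_m Q_{Y^n|X^n = x^n(m)}`
of a codebook `C` of size `M = 2^{nR}` (so `2^{-nR} = 1/M`). -/
def inducedDist (QYX : 𝒳 → 𝒴 → ℝ) (n M : ℕ) (C : Fin M → Fin n → 𝒳)
    (ys : Fin n → 𝒴) : ℝ :=
  (M : ℝ)⁻¹ * ∑ m, chanProd QYX n (C m) ys

/-- The typical part `P_{C,1}(y^n) = 2^{-nR} ∑_m Q_{Y^n|X^n=x^n(m)}(y^n) 1{(x^n(m),y^n) ∈ 𝒜_ε}`. -/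
def Ptyp (QX : 𝒳 → ℝ) (QYX : 𝒳 → 𝒴 → ℝ) (n M : ℕ) (ε : ℝ)
    (C : Fin M → Fin n → 𝒳) (ys : Fin n → 𝒴) : ℝ :=
  (M : ℝ)⁻¹ * ∑ m, if JTypical QX QYX n ε (C m) ys then chanProd QYX n (C m) ys else 0

/-- The atypical part `P_{C,2}(y^n) = 2^{-nR} ∑_m Q_{Y^n|X^n=x^n(m)}(y^n) 1{(x^n(m),y^n) ∉ 𝒜_ε}`. -/
def Patyp (QX : 𝒳 → ℝ) (QYX : 𝒳 → 𝒴 → ℝ) (n M : ℕ) (ε : ℝ)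
    (C : Fin M → Fin n → 𝒳) (ys : Fin n → 𝒴) : ℝ :=
  (M : ℝ)⁻¹ * ∑ m, if ¬ JTypical QX QYX n ε (C m) ys then chanProd QYX n (C m) ys else 0

/-- The density `D_{C,1}(y^n) = P_{C,1}(y^n)/Q_{Y^n}(y^n)
= 2^{-nR} ∑_m (Q_{Y^n|X^n=x^n(m)}(y^n)/Q_{Y^n}(y^n)) 1{(x^n(m),y^n) ∈ 𝒜_ε}`. -/
def Dtyp (QX : 𝒳 → ℝ) (QYX : 𝒳 → 𝒴 → ℝ) (n M : ℕ) (ε : ℝ)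
    (C : Fin M → Fin n → 𝒳) (ys : Fin n → 𝒴) : ℝ :=
  (M : ℝ)⁻¹ * ∑ m, if JTypical QX QYX n ε (C m) ys then
    chanProd QYX n (C m) ys / prodDist (outDist QX QYX) n ys else 0

/-- Total variation distance `(1/2) ∑_y |P y - Q y|` on a finite type. -/
def tvDist {β : Type*} [Fintype β] (P Q : β → ℝ) : ℝ := (1 / 2) * ∑ y, |P y - Q y|

/-- Probability of an event `E` over the random codebook of `M` codewords drawn
i.i.d. from `Q_{X^n}`. -/
def cbProb (QX : 𝒳 → ℝ) (n M : ℕ) (E : (Fin M → Fin n → 𝒳) → Prop) : ℝ :=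
  ∑ C : Fin M → Fin n → 𝒳, if E C then ∏ m, prodDist QX n (C m) else 0

/-- `𝒬(x)`: one minus the standard normal cumulative distribution function. -/
def gaussQ (x : ℝ) : ℝ :=
  (Real.sqrt (2 * Real.pi))⁻¹ * ∫ t in Set.Ioi x, Real.exp (-(t ^ 2 / 2))

/-- `𝒬⁻¹`, the inverse of `𝒬`. -/
def gaussQInv : ℝ → ℝ := Function.invFun gaussQ
section Aux

lemma prodDist_nonneg {α : Type*} [Fintype α] {p : α → ℝ} (hp : ∀ a, 0 ≤ p a)
    (n : ℕ) (xs : Fin n → α) : 0 ≤ prodDist p n xs :=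
  Finset.prod_nonneg fun i _ => hp (xs i)

lemma sum_prodDist {α : Type*} [Fintype α] {p : α → ℝ} (hp : ∑ a, p a = 1)
    (n : ℕ) : ∑ xs : Fin n → α, prodDist p n xs = 1 := by
  unfold prodDist
  rw [← Fintype.sum_pow, hp, one_pow]

lemma chanProd_nonneg {𝒳 𝒴 : Type*} [Fintype 𝒳] [Fintype 𝒴]
    {QYX : 𝒳 → 𝒴 → ℝ} (h : ∀ x, IsPMF (QYX x)) (n : ℕ) (xs : Fin n → 𝒳)
    (ys : Fin n → 𝒴) : 0 ≤ chanProd QYX n xs ys :=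
  Finset.prod_nonneg fun i _ => (h (xs i)).1 (ys i)

lemma sum_chanProd {𝒳 𝒴 : Type*} [Fintype 𝒳] [Fintype 𝒴]
    {QYX : 𝒳 → 𝒴 → ℝ} (h : ∀ x, IsPMF (QYX x)) (n : ℕ) (xs : Fin n → 𝒳) :
    ∑ ys : Fin n → 𝒴, chanProd QYX n xs ys = 1 := by
  unfold chanProd
  rw [show (∑ ys : Fin n → 𝒴, ∏ i, QYX (xs i) (ys i))
      = ∏ i, ∑ y, QYX (xs i) y from (Fintype.prod_sum _).symm]
  simp [(fun i => (h (xs i)).2 : ∀ i : Fin n, ∑ y, QYX (xs i) y = 1)]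

/-- Multiplicative Chernoff bound on a finite probability space. -/
lemma chernoff_aux {Ω : Type*} [Fintype Ω] (w g : Ω → ℝ)
    (hw : ∀ x, 0 ≤ w x) (hw1 : ∑ x, w x = 1)
    (hg0 : ∀ x, 0 ≤ g x) (hg1 : ∀ x, g x ≤ 1) (M : ℕ) (μ' : ℝ)
    (hμ' : ∑ x, w x * g x ≤ μ') (hμ'0 : 0 ≤ μ') :
    (∑ C : Fin M → Ω, if 2 * M * μ' ≤ ∑ m, g (C m) then ∏ m, w (C m) else 0)
      ≤ Real.exp (-(1 / 3) * (M * μ')) := by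
  set t : ℝ := Real.log 2 with ht
  have ht0 : (0:ℝ) < t := Real.log_pos (by norm_num)
  set s : ℝ := 2 * M * μ' with hs
  have hprodw : ∀ C : Fin M → Ω, 0 ≤ ∏ m, w (C m) :=
    fun C => Finset.prod_nonneg fun m _ => hw _
  have step1 : (∑ C : Fin M → Ω, if s ≤ ∑ m, g (C m) then ∏ m, w (C m) else 0)
      ≤ ∑ C : Fin M → Ω, Real.exp (t * ((∑ m, g (C m)) - s)) * ∏ m, w (C m) := by
    refine Finset.sum_le_sum fun C _ => ?_
    by_cases hC : s ≤ ∑ m, g (C m)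
    · rw [if_pos hC]
      have h1 : (1:ℝ) ≤ Real.exp (t * ((∑ m, g (C m)) - s)) := by
        rw [← Real.exp_zero]
        exact Real.exp_le_exp.2 (mul_nonneg ht0.le (by linarith))
      exact le_mul_of_one_le_left (hprodw C) h1
    · rw [if_neg hC]
      exact mul_nonneg (Real.exp_pos _).le (hprodw C)
  have step2 : ∀ C : Fin M → Ω, Real.exp (t * ((∑ m, g (C m)) - s)) * ∏ m, w (C m)
      = Real.exp (-(t * s)) * ∏ m, (w (C m) * Real.exp (t * g (C m))) := by
    intro C
    rw [Finset.prod_mul_distrib, mul_sub, Real.exp_sub, Finset.mul_sum,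
      Real.exp_sum]
    rw [div_eq_mul_inv, ← Real.exp_neg]
    ring
  have step3 : (∑ C : Fin M → Ω, ∏ m, (w (C m) * Real.exp (t * g (C m))))
      = (∑ x, w x * Real.exp (t * g x)) ^ M := by
    rw [Fintype.sum_pow]
  set E : ℝ := ∑ x, w x * Real.exp (t * g x) with hE
  have hE0 : 0 ≤ E :=
    Finset.sum_nonneg fun x _ => mul_nonneg (hw x) (Real.exp_pos _).le
  set μ : ℝ := ∑ x, w x * g x with hμ
  have hμ0 : 0 ≤ μ := Finset.sum_nonneg fun x _ => mul_nonneg (hw x) (hg0 x)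
  have hEexp : E ≤ Real.exp μ := by
    have hE1 : E ≤ 1 + μ := by
      have : ∀ x, w x * Real.exp (t * g x) ≤ w x * (1 + g x) := by
        intro x
        refine mul_le_mul_of_nonneg_left ?_ (hw x)
        have hconv := convexOn_exp.2 (Set.mem_univ (0:ℝ)) (Set.mem_univ t)
          (by linarith [hg1 x] : (0:ℝ) ≤ 1 - g x) (hg0 x) (by ring)
        simp only [smul_eq_mul, mul_zero, zero_add, Real.exp_zero] at hconv
        have h2 : Real.exp t = 2 := Real.exp_log (by norm_num)
        calc Real.exp (t * g x) = Real.exp (g x * t) := by ring_nf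
          _ ≤ (1 - g x) * 1 + g x * Real.exp t := hconv
          _ = 1 + g x := by rw [h2]; ring
      calc E ≤ ∑ x, w x * (1 + g x) := Finset.sum_le_sum fun x _ => this x
        _ = 1 + μ := by
          simp only [mul_add, mul_one, Finset.sum_add_distrib, hw1, hμ]
    calc E ≤ 1 + μ := hE1
      _ ≤ Real.exp μ := by linarith [Real.add_one_le_exp μ]
  have hpow : E ^ M ≤ Real.exp ((M : ℝ) * μ) := by
    calc E ^ M ≤ (Real.exp μ) ^ M := pow_le_pow_left₀ hE0 hEexp M
      _ = Real.exp ((M : ℝ) * μ) := (Real.exp_nat_mul μ M).symm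
  have hMnn : (0:ℝ) ≤ (M:ℝ) := Nat.cast_nonneg M
  calc (∑ C : Fin M → Ω, if s ≤ ∑ m, g (C m) then ∏ m, w (C m) else 0)
      ≤ ∑ C : Fin M → Ω, Real.exp (t * ((∑ m, g (C m)) - s)) * ∏ m, w (C m) :=
        step1
    _ = Real.exp (-(t * s)) * E ^ M := by
        rw [Finset.sum_congr rfl fun C _ => step2 C, ← Finset.mul_sum, step3]
    _ ≤ Real.exp (-(t * s)) * Real.exp ((M:ℝ) * μ) := by
        exact mul_le_mul_of_nonneg_left hpow (Real.exp_pos _).le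
    _ = Real.exp ((M:ℝ) * μ - t * s) := by rw [← Real.exp_add]; ring_nf
    _ ≤ Real.exp (-(1 / 3) * (M * μ')) := by
        refine Real.exp_le_exp.2 ?_
        have h1 : (M:ℝ) * μ ≤ (M:ℝ) * μ' := mul_le_mul_of_nonneg_left hμ' hMnn
        have h2 : (0:ℝ) ≤ (M:ℝ) * μ' := mul_nonneg hMnn hμ'0
        have h3 : (2:ℝ)/3 ≤ t := by
          rw [ht]; nlinarith [Real.log_two_gt_d9]
        nlinarith [mul_le_mul_of_nonneg_left h3 h2]

end Aux
section Aux2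

variable {𝒳 𝒴 : Type*} [Fintype 𝒳] [Fintype 𝒴]

lemma atypProb_le_rpow (QX : 𝒳 → ℝ) (QYX : 𝒳 → 𝒴 → ℝ)
    (hQX : IsPMF QX) (hQYX : ∀ x, IsPMF (QYX x))
    (n : ℕ) (hn : 0 < n) (ε : ℝ) (a : ℝ) (ha : 1 < a) (β : ℝ)
    (hβ : β = (a - 1) * (mutualInfo QX QYX + ε - renyiDiv QX QYX a)) :
    atypProb QX QYX n ε ≤ 2 ^ (-(β * n)) := by
  set c : ℝ := mutualInfo QX QYX + ε with hc
  set F : 𝒳 → 𝒴 → ℝ := fun x y =>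
    QX x * (QYX x y ^ a * outDist QX QYX y ^ (1 - a)) with hF
  have houtnn : ∀ y, 0 ≤ outDist QX QYX y := fun y =>
    Finset.sum_nonneg fun x _ => mul_nonneg (hQX.1 x) ((hQYX x).1 y)
  have hF0 : ∀ x y, 0 ≤ F x y := fun x y =>
    mul_nonneg (hQX.1 x) (mul_nonneg (Real.rpow_nonneg ((hQYX x).1 y) _)
      (Real.rpow_nonneg (houtnn y) _))
  set D : ℝ := 2 ^ (-((a - 1) * c) * (n : ℝ)) with hD
  have hD0 : (0:ℝ) < D := Real.rpow_pos_of_pos (by norm_num) _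
  have hn' : (0:ℝ) < (n : ℝ) := Nat.cast_pos.2 hn
  -- termwise bound
  have term : ∀ (xs : Fin n → 𝒳) (ys : Fin n → 𝒴),
      (if ¬ JTypical QX QYX n ε xs ys then
        prodDist QX n xs * chanProd QYX n xs ys else 0)
      ≤ (∏ i, F (xs i) (ys i)) * D := by
    intro xs ys
    have hprodF : 0 ≤ ∏ i, F (xs i) (ys i) :=
      Finset.prod_nonneg fun i _ => hF0 _ _
    by_cases hJ : JTypical QX QYX n ε xs ys
    · rw [if_neg (not_not_intro hJ)]
      exact mul_nonneg hprodF hD0.le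
    · rw [if_pos hJ]
      set px := prodDist QX n xs with hpx
      set ch := chanProd QYX n xs ys with hch
      set po := prodDist (outDist QX QYX) n ys with hpo
      have hpxnn : 0 ≤ px := prodDist_nonneg hQX.1 n xs
      have hchnn : 0 ≤ ch := chanProd_nonneg hQYX n xs ys
      have hponn : 0 ≤ po := prodDist_nonneg houtnn n ys
      have hlt : c < (n : ℝ)⁻¹ * Real.logb 2 (ch / po) := by
        simpa [JTypical, hc] using hJ
      by_cases hch0 : ch = 0
      · rw [hch0, mul_zero]
        exact mul_nonneg hprodF hD0.le
      by_cases hpo0 : po = 0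
      · have : px * ch = 0 := by
          have h0 : ∃ i ∈ Finset.univ, outDist QX QYX (ys i) = 0 := by
            have h0' := hpo0
            rw [hpo, prodDist] at h0'
            exact Finset.prod_eq_zero_iff.1 h0'
          obtain ⟨i, -, hi⟩ := h0
          have hterm : QX (xs i) * QYX (xs i) (ys i) = 0 := by
            have h1 := (Finset.sum_eq_zero_iff_of_nonneg
              (fun x _ => mul_nonneg (hQX.1 x) ((hQYX x).1 (ys i)))).1 hi
            exact h1 (xs i) (Finset.mem_univ _)
          rw [hpx, hch, prodDist, chanProd, ← Finset.prod_mul_distrib]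
          exact Finset.prod_eq_zero (Finset.mem_univ i) hterm
        rw [this]
        exact mul_nonneg hprodF hD0.le
      -- main case
      have hchp : 0 < ch := lt_of_le_of_ne hchnn (Ne.symm hch0)
      have hpop : 0 < po := lt_of_le_of_ne hponn (Ne.symm hpo0)
      have hr0 : 0 < ch / po := div_pos hchp hpop
      have hcl : (n : ℝ) * c < Real.logb 2 (ch / po) := by
        have h1 := mul_lt_mul_of_pos_left hlt hn'
        rwa [← mul_assoc, mul_inv_cancel₀ hn'.ne', one_mul] at h1
      have h2r : (2:ℝ) ^ ((n : ℝ) * c) < ch / po :=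
        (Real.lt_logb_iff_rpow_lt (by norm_num) hr0).1 hcl
      have hZpos : (0:ℝ) < (2:ℝ) ^ ((n:ℝ) * c) := Real.rpow_pos_of_pos two_pos _
      have hb1 : 1 < ch / po * 2 ^ (-((n:ℝ) * c)) := by
        rw [Real.rpow_neg (by norm_num : (0:ℝ) ≤ 2)]
        rw [lt_mul_inv_iff₀ hZpos, one_mul]
        exact h2r
      have hone : 1 ≤ (ch / po * 2 ^ (-((n:ℝ) * c))) ^ (a - 1) :=
        le_of_lt ((Real.one_lt_rpow_iff_of_pos (by linarith)).2
          (Or.inl ⟨hb1, by linarith⟩))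
      have key : ch * (ch / po * 2 ^ (-((n:ℝ) * c))) ^ (a - 1)
          = ch ^ a * po ^ (1 - a) * D := by
        rw [Real.mul_rpow hr0.le (Real.rpow_nonneg (by norm_num) _),
          Real.div_rpow hchnn hponn,
          ← Real.rpow_mul (by norm_num : (0:ℝ) ≤ 2),
          div_eq_mul_inv, ← Real.rpow_neg hponn, neg_sub]
        have hce : ch * ch ^ (a - 1) = ch ^ a := by
          calc ch * ch ^ (a - 1) = ch ^ (1:ℝ) * ch ^ (a - 1) := by
                rw [Real.rpow_one]
            _ = ch ^ (1 + (a - 1)) := (Real.rpow_add hchp _ _).symm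
            _ = ch ^ a := by ring_nf
        rw [hD, show -((n:ℝ) * c) * (a - 1) = -((a - 1) * c) * (n:ℝ) by ring]
        calc ch * (ch ^ (a-1) * po ^ (1-a) * 2 ^ (-((a-1)*c) * (n:ℝ)))
            = (ch * ch ^ (a-1)) * po ^ (1-a) * 2 ^ (-((a-1)*c) * (n:ℝ)) := by
              ring
          _ = ch ^ a * po ^ (1-a) * 2 ^ (-((a-1)*c) * (n:ℝ)) := by rw [hce]
      have hprodFeq : (∏ i, F (xs i) (ys i)) = px * (ch ^ a * po ^ (1 - a)) := by
        rw [hF]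
        simp only []
        rw [Finset.prod_mul_distrib, Finset.prod_mul_distrib]
        rw [Real.finset_prod_rpow _ _ (fun i _ => (hQYX (xs i)).1 (ys i)) a,
          Real.finset_prod_rpow _ _ (fun i _ => houtnn (ys i)) (1 - a)]
        rfl
      calc px * ch ≤ px * ch * (ch / po * 2 ^ (-((n:ℝ) * c))) ^ (a - 1) :=
            le_mul_of_one_le_right (mul_nonneg hpxnn hchnn) hone
        _ = px * (ch ^ a * po ^ (1 - a)) * D := by rw [mul_assoc, key]; ring
        _ = (∏ i, F (xs i) (ys i)) * D := by rw [hprodFeq]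
  -- sum the termwise bound
  set S : ℝ := ∑ x, ∑ y, F x y with hS
  have hS0 : 0 ≤ S :=
    Finset.sum_nonneg fun x _ => Finset.sum_nonneg fun y _ => hF0 x y
  have hfact : (∑ xs : Fin n → 𝒳, ∑ ys : Fin n → 𝒴, ∏ i, F (xs i) (ys i))
      = S ^ n := by
    rw [show (∑ xs : Fin n → 𝒳, ∑ ys : Fin n → 𝒴, ∏ i, F (xs i) (ys i))
        = ∑ p : (Fin n → 𝒳) × (Fin n → 𝒴), ∏ i, F (p.1 i) (p.2 i) from
        (Fintype.sum_prod_type' _).symm]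
    rw [← Equiv.sum_comp (Equiv.arrowProdEquivProdArrow (Fin n) (fun _ => 𝒳) (fun _ => 𝒴))
      (fun p : (Fin n → 𝒳) × (Fin n → 𝒴) => ∏ i, F (p.1 i) (p.2 i))]
    rw [hS, ← Fintype.sum_prod_type (fun z : 𝒳 × 𝒴 => F z.1 z.2),
      Fintype.sum_pow]
    rfl
  have hsum : atypProb QX QYX n ε ≤ S ^ n * D := by
    have h1 : atypProb QX QYX n ε
        ≤ ∑ xs : Fin n → 𝒳, ∑ ys : Fin n → 𝒴, (∏ i, F (xs i) (ys i)) * D := by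
      rw [atypProb]
      exact Finset.sum_le_sum fun xs _ =>
        Finset.sum_le_sum fun ys _ => term xs ys
    have h2 : (∑ xs : Fin n → 𝒳, ∑ ys : Fin n → 𝒴, (∏ i, F (xs i) (ys i)) * D)
        = (∑ xs : Fin n → 𝒳, ∑ ys : Fin n → 𝒴, ∏ i, F (xs i) (ys i)) * D := by
      simp only [Finset.sum_mul]
    rw [h2, hfact] at h1
    exact h1
  -- relate S to the Renyi divergence
  have hSrenyi : S = ∑ x, ∑ y,
      (QX x * QYX x y) ^ a * (QX x * outDist QX QYX y) ^ (1 - a) := by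
    rw [hS]
    refine Finset.sum_congr rfl fun x _ => Finset.sum_congr rfl fun y _ => ?_
    by_cases hx : QX x = 0
    · rw [hF]
      simp only [hx, zero_mul, Real.zero_rpow (by linarith : a ≠ 0)]
    · have hxp : 0 < QX x := lt_of_le_of_ne (hQX.1 x) (Ne.symm hx)
      rw [hF]
      simp only []
      rw [Real.mul_rpow (hQX.1 x) ((hQYX x).1 y),
        Real.mul_rpow (hQX.1 x) (houtnn y)]
      have hq : QX x ^ a * QX x ^ (1 - a) = QX x := by
        rw [← Real.rpow_add hxp]
        simp
      calc QX x * (QYX x y ^ a * outDist QX QYX y ^ (1 - a))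
          = (QX x ^ a * QX x ^ (1-a)) * (QYX x y ^ a * outDist QX QYX y ^ (1-a)) := by
            rw [hq]
        _ = QX x ^ a * QYX x y ^ a * (QX x ^ (1-a) * outDist QX QYX y ^ (1-a)) := by
            ring
  have hDnn : (0:ℝ) ≤ (2:ℝ) ^ (-(β * (n:ℝ))) := Real.rpow_nonneg (by norm_num) _
  rcases eq_or_lt_of_le hS0 with hSz | hSp
  · -- S = 0
    have hz : S ^ n = 0 := by rw [← hSz]; exact zero_pow hn.ne'
    calc atypProb QX QYX n ε ≤ S ^ n * D := hsum
      _ = 0 := by rw [hz, zero_mul]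
      _ ≤ (2:ℝ) ^ (-(β * (n:ℝ))) := hDnn
  · -- S > 0
    have hrd : renyiDiv QX QYX a = (a - 1)⁻¹ * Real.logb 2 S := by
      rw [renyiDiv, hSrenyi]
    have ha1 : (a - 1) ≠ 0 := by
      have : (0:ℝ) < a - 1 := by linarith
      exact this.ne'
    have hlogS : (a - 1) * renyiDiv QX QYX a = Real.logb 2 S := by
      rw [hrd, ← mul_assoc, mul_inv_cancel₀ ha1, one_mul]
    have hSeq : (2:ℝ) ^ ((a - 1) * renyiDiv QX QYX a) = S := by
      rw [hlogS]
      exact Real.rpow_logb (by norm_num) (by norm_num) hSp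
    have hSpow : S ^ n = (2:ℝ) ^ ((a - 1) * renyiDiv QX QYX a * (n:ℝ)) := by
      rw [Real.rpow_mul (by norm_num : (0:ℝ) ≤ 2), hSeq, Real.rpow_natCast]
    have hfin : S ^ n * D = (2:ℝ) ^ (-(β * (n:ℝ))) := by
      rw [hSpow, hD, ← Real.rpow_add two_pos]
      congr 1
      rw [hβ, hc]
      ring
    rw [← hfin]
    exact hsum

end Aux2


/-- **Chernoff bound for the atypical mass over the random codebook (Eq. (21)).**
With `β = (α − 1)(I(X;Y) + ε − d_α(Q_{X,Y}, Q_X Q_Y))`, the probability over the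
random codebook `𝒞` of size `M = 2^{nR}` that `∑_{y^n} P_{𝒞,2}(y^n) ≥ 2·2^{−βn}`
is at most `e^{−(1/3) 2^{n(R−β)}}`. -/
theorem atypical_mass_chernoff
    {𝒳 𝒴 : Type*} [Fintype 𝒳] [Fintype 𝒴]
    (QX : 𝒳 → ℝ) (QYX : 𝒳 → 𝒴 → ℝ) (hQX : IsPMF QX) (hQYX : ∀ x, IsPMF (QYX x))
    (R : ℝ) (n M : ℕ) (hM : (M : ℝ) = 2 ^ ((n : ℝ) * R))
    (ε : ℝ) (hε : 0 < ε) (a : ℝ) (ha : 1 < a)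
    (β : ℝ) (hβ : β = (a - 1) * (mutualInfo QX QYX + ε - renyiDiv QX QYX a)) :
    cbProb QX n M (fun C => 2 * 2 ^ (-(β * n)) ≤ ∑ ys, Patyp QX QYX n M ε C ys)
      ≤ Real.exp (-(1 / 3) * 2 ^ ((n : ℝ) * (R - β))) := by
  have hM0 : (0:ℝ) < (M:ℝ) := by
    rw [hM]; exact Real.rpow_pos_of_pos two_pos _
  set g : (Fin n → 𝒳) → ℝ := fun xs =>
    ∑ ys : Fin n → 𝒴, if ¬ JTypical QX QYX n ε xs ys
      then chanProd QYX n xs ys else 0 with hg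
  have hg0 : ∀ xs, 0 ≤ g xs := fun xs =>
    Finset.sum_nonneg fun ys _ => by
      split
      · exact chanProd_nonneg hQYX n xs ys
      · exact le_refl 0
  have hg1 : ∀ xs, g xs ≤ 1 := by
    intro xs
    calc g xs ≤ ∑ ys : Fin n → 𝒴, chanProd QYX n xs ys := by
          refine Finset.sum_le_sum fun ys _ => ?_
          split
          · exact le_refl _
          · exact chanProd_nonneg hQYX n xs ys
      _ = 1 := sum_chanProd hQYX n xs
  have hPatyp : ∀ C : Fin M → Fin n → 𝒳,
      (∑ ys, Patyp QX QYX n M ε C ys) = (M:ℝ)⁻¹ * ∑ m, g (C m) := by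
    intro C
    unfold Patyp
    rw [← Finset.mul_sum, Finset.sum_comm]
  have hμeq : (∑ xs : Fin n → 𝒳, prodDist QX n xs * g xs)
      = atypProb QX QYX n ε := by
    unfold atypProb
    refine Finset.sum_congr rfl fun xs _ => ?_
    rw [hg]
    simp only [Finset.mul_sum, mul_ite, mul_zero]
  rcases Nat.eq_zero_or_pos n with hn | hn
  · -- n = 0 : the event never happens
    have hfalse : ∀ C : Fin M → Fin n → 𝒳,
        ¬ (2 * 2 ^ (-(β * (n:ℝ))) ≤ ∑ ys, Patyp QX QYX n M ε C ys) := by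
      intro C hle
      have h1 : (∑ ys, Patyp QX QYX n M ε C ys) ≤ 1 := by
        rw [hPatyp C, inv_mul_le_iff₀ hM0, mul_one]
        calc (∑ m, g (C m)) ≤ ∑ _m : Fin M, (1:ℝ) :=
              Finset.sum_le_sum fun m _ => hg1 (C m)
          _ = (M:ℝ) := by simp
      have hncast : ((n:ℕ):ℝ) = 0 := by rw [hn]; norm_num
      have h2 : 2 * (2:ℝ) ^ (-(β * (n:ℝ))) = 2 := by
        rw [hncast]
        norm_num
      rw [h2] at hle
      linarith
    unfold cbProb
    rw [Finset.sum_congr rfl fun C _ => if_neg (hfalse C)]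
    simp only [Finset.sum_const_zero]
    exact (Real.exp_pos _).le
  · -- n ≥ 1
    set μ' : ℝ := 2 ^ (-(β * (n:ℝ))) with hμ'def
    have hμ'0 : 0 ≤ μ' := Real.rpow_nonneg (by norm_num) _
    have hatyp : atypProb QX QYX n ε ≤ μ' :=
      atypProb_le_rpow QX QYX hQX hQYX n hn ε a ha β hβ
    have hμ' : (∑ xs : Fin n → 𝒳, prodDist QX n xs * g xs) ≤ μ' := by
      rw [hμeq]; exact hatyp
    have hiff : ∀ C : Fin M → Fin n → 𝒳,
        (2 * 2 ^ (-(β * (n:ℝ))) ≤ ∑ ys, Patyp QX QYX n M ε C ys)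
          ↔ (2 * (M:ℝ) * μ' ≤ ∑ m, g (C m)) := by
      intro C
      rw [hPatyp C, le_inv_mul_iff₀ hM0, ← hμ'def]
      constructor <;> intro h <;> linarith
    have hcb : cbProb QX n M
        (fun C => 2 * 2 ^ (-(β * n)) ≤ ∑ ys, Patyp QX QYX n M ε C ys)
        = ∑ C : Fin M → Fin n → 𝒳,
            if 2 * (M:ℝ) * μ' ≤ ∑ m, g (C m) then ∏ m, prodDist QX n (C m)
            else 0 := by
      unfold cbProb
      exact Finset.sum_congr rfl fun C _ => if_congr (hiff C) rfl rfl
    rw [hcb]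
    have hbound := chernoff_aux (prodDist QX n) g
      (prodDist_nonneg hQX.1 n) (sum_prodDist hQX.2 n) hg0 hg1 M μ' hμ' hμ'0
    refine le_trans hbound ?_
    have hKeq : (M:ℝ) * μ' = 2 ^ ((n:ℝ) * (R - β)) := by
      rw [hM, hμ'def, ← Real.rpow_add two_pos]
      congr 1
      ring
    rw [hKeq]
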